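/- Let φ : [0,1] → [0,1] be differentiable with φ(x₀) = x₀ and suppose that for some sequence n_k → ∞ and some g ∈ C¹([0,1]) and positive reals c_k, the functions φ_{n_k+1}/c_k converge to g in C¹ norm (uniform convergence of the functions and their derivatives), where φ_n denotes the n-th iterate, φ_n(x) → x₀ for all x ∈ [0,1], x₀ ≠ 0, and 1/c_k → g(x₀)/x₀ ≠ 0. If additionally |φ'(x₀)| ≥ 1, this leads to a contradiction: g must be constant with g'(x₀) = 0, yet |(φ_{n_k+1})'(x₀)/c_k| ≥ 1/c_k → g(x₀)/x₀ > 0. -/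

import Mathlib

open Filter

private lemma contDiff_iterate {f : ℝ → ℝ} (hf : ContDiff ℝ 1 f) :
    ∀ m : ℕ, ContDiff ℝ 1 (f^[m])
  | 0 => contDiff_id
  | (m+1) => by
    rw [Function.iterate_succ]
    exact (contDiff_iterate hf m).comp hf


set_option maxHeartbeats 1000000 in
theorem iterate_normalization_contradiction
    (φ : ℝ → ℝ) (hφ : ContDiff ℝ 1 φ)
    (hmap : Set.MapsTo φ (Set.Icc 0 1) (Set.Icc 0 1))
    (x₀ : ℝ) (hx₀ : x₀ ∈ Set.Icc (0 : ℝ) 1) (hfix : φ x₀ = x₀) (hx₀ne : x₀ ≠ 0)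
    (hiter : ∀ x ∈ Set.Icc (0 : ℝ) 1,
      Tendsto (fun n : ℕ => φ^[n] x) atTop (nhds x₀))
    (nk : ℕ → ℕ) (hnk : Tendsto nk atTop atTop)
    (c : ℕ → ℝ) (hc : ∀ k, 0 < c k)
    (g : ℝ → ℝ) (hg : ContDiff ℝ 1 g)
    (hC0 : Tendsto (fun k : ℕ =>
        ⨆ x : Set.Icc (0 : ℝ) 1, |φ^[nk k + 1] x / c k - g x|) atTop (nhds 0))
    (hC1 : Tendsto (fun k : ℕ =>
        ⨆ x : Set.Icc (0 : ℝ) 1, |deriv (φ^[nk k + 1]) x / c k - deriv g x|)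
      atTop (nhds 0))
    (hclim : Tendsto (fun k : ℕ => 1 / c k) atTop (nhds (g x₀ / x₀)))
    (hgx₀ : g x₀ / x₀ ≠ 0)
    (hd : 1 ≤ |deriv φ x₀|) :
    False := by
  have hφc : Continuous φ := hφ.continuous
  have hgc : Continuous g := hg.continuous
  have hiterC : ∀ m : ℕ, ContDiff ℝ 1 (φ^[m]) := contDiff_iterate hφ
  have hnt : Tendsto (fun k => nk k + 1) atTop atTop :=
    (tendsto_add_atTop_nat 1).comp hnk
  -- pointwise C⁰ convergence
  have key : ∀ x ∈ Set.Icc (0:ℝ) 1,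
      Tendsto (fun k => φ^[nk k + 1] x / c k) atTop (nhds (g x)) := by
    intro x hx
    have h1 : Tendsto (fun k => φ^[nk k + 1] x / c k - g x) atTop (nhds 0) := by
      apply squeeze_zero_norm ?_ hC0
      intro k
      simp only [Real.norm_eq_abs]
      have hcont : ContinuousOn (fun y => |φ^[nk k + 1] y / c k - g y|) (Set.Icc 0 1) :=
        ((((hφc.iterate _).div_const _).sub hgc).abs).continuousOn
      have hbdd : BddAbove (Set.range (fun y : Set.Icc (0:ℝ) 1 =>
          |φ^[nk k + 1] y / c k - g y|)) := by
        have := (isCompact_Icc.image_of_continuousOn hcont).bddAbove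
        rwa [Set.image_eq_range] at this
      exact le_ciSup hbdd ⟨x, hx⟩
    simpa using h1.add_const (g x)
  -- g constant on Icc
  have hgf : ∀ x ∈ Set.Icc (0:ℝ) 1, g x = g x₀ := by
    intro x hx
    have h2 : Tendsto (fun k => φ^[nk k + 1] x) atTop (nhds x₀) :=
      (hiter x hx).comp hnt
    have h3 : Tendsto (fun k => φ^[nk k + 1] x / c k) atTop
        (nhds (x₀ * (g x₀ / x₀))) := by
      simpa [mul_one_div, div_eq_mul_inv] using h2.mul hclim
    have he : x₀ * (g x₀ / x₀) = g x₀ := by field_simp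
    rw [he] at h3
    exact tendsto_nhds_unique (key x hx) h3
  -- deriv g x₀ = 0
  have hd0 : deriv g x₀ = 0 := by
    have hdiff : DifferentiableAt ℝ g x₀ := (hg.differentiable one_ne_zero) x₀
    have hud : UniqueDiffWithinAt ℝ (Set.Icc (0:ℝ) 1) x₀ :=
      (uniqueDiffOn_Icc (by norm_num)).uniqueDiffWithinAt hx₀
    have h1 : derivWithin g (Set.Icc 0 1) x₀ = deriv g x₀ := hdiff.derivWithin hud
    have h2 : derivWithin g (Set.Icc (0:ℝ) 1) x₀
        = derivWithin (fun _ => g x₀) (Set.Icc (0:ℝ) 1) x₀ :=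
      derivWithin_congr hgf (by simp)
    rw [← h1, h2]; simp
  -- deriv convergence at x₀
  have hderivlim : Tendsto (fun k => deriv (φ^[nk k + 1]) x₀ / c k) atTop
      (nhds (deriv g x₀)) := by
    have h1 : Tendsto (fun k => deriv (φ^[nk k + 1]) x₀ / c k - deriv g x₀)
        atTop (nhds 0) := by
      apply squeeze_zero_norm ?_ hC1
      intro k
      simp only [Real.norm_eq_abs]
      have hcont : ContinuousOn (fun y => |deriv (φ^[nk k + 1]) y / c k - deriv g y|)
          (Set.Icc 0 1) :=
        (((((hiterC _).continuous_deriv le_rfl).div_const _).sub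
          (hg.continuous_deriv le_rfl)).abs).continuousOn
      have hbdd : BddAbove (Set.range (fun y : Set.Icc (0:ℝ) 1 =>
          |deriv (φ^[nk k + 1]) y / c k - deriv g y|)) := by
        have := (isCompact_Icc.image_of_continuousOn hcont).bddAbove
        rwa [Set.image_eq_range] at this
      exact le_ciSup hbdd ⟨x₀, hx₀⟩
    simpa using h1.add_const (deriv g x₀)
  -- chain rule at fixed point
  have hpow : ∀ k, deriv (φ^[nk k + 1]) x₀ = (deriv φ x₀) ^ (nk k + 1) := by
    intro k
    have hda : HasDerivAt φ (deriv φ x₀) x₀ := (hφ.differentiable one_ne_zero x₀).hasDerivAt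
    have h2 : HasDerivAt (φ^[nk k + 1]) ((deriv φ x₀) ^ (nk k + 1)) x₀ :=
      HasDerivAt.iterate x₀ hda hfix (nk k + 1)
    exact h2.deriv
  have hlb : ∀ k, 1 / c k ≤ |deriv (φ^[nk k + 1]) x₀ / c k| := by
    intro k
    rw [hpow k, abs_div, abs_pow, abs_of_pos (hc k)]
    gcongr
    · exact (hc k).le
    · simpa using pow_le_pow_left₀ zero_le_one hd (nk k + 1)
  have hle : g x₀ / x₀ ≤ |deriv g x₀| :=
    le_of_tendsto_of_tendsto' hclim hderivlim.abs hlb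
  have hge : 0 ≤ g x₀ / x₀ :=
    ge_of_tendsto' hclim (fun k => (one_div_pos.2 (hc k)).le)
  rw [hd0, abs_zero] at hle
  exact hgx₀ (le_antisymm hle hge)
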